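/- arXiv:0805.1077 — 2 statements merged into one kernel-verified Lean document; each statement's English description precedes it below -/
import Mathlib

section
/- Let A be an admissible pseudo-Hermitian n×n matrix with eigenvalues λ_p ≥ … ≥ λ_1 > μ_1 ≥ … ≥ μ_q and pseudo-orthonormal eigenbasis v_1,…,v_p, w_1,…,w_q, and let W = span{w_1,…,w_q}. For each 1 ≤ k ≤ q: (a) every x ∈ ℂⁿ₋ satisfying ⟨x, w_i⟩ = 0 for all 1 ≤ i ≤ k−1 has R_A(x) ≤ μ_k, with equality for x = w_k (so μ_k is this maximum); and (b) every nonzero x ∈ W satisfying ⟨x, w_i⟩ = 0 for all k+1 ≤ i ≤ q has R_A(x) ≥ μ_k, with equality for x = w_k (so μ_k is this minimum). -/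
open Matrix

/-- The signature matrix `J = diag(1,…,1,−1,…,−1)` with `p` ones and `q` minus-ones. -/
noncomputable def Jmat (p q : ℕ) : Matrix (Fin (p + q)) (Fin (p + q)) ℂ :=
  Matrix.diagonal (fun i => if (i : ℕ) < p then 1 else -1)

/-- The indefinite pairing `⟨z,w⟩ = Σ_{i<p} z_i conj(w_i) − Σ_{i≥p} z_i conj(w_i)`;
equivalently `w† · z` where `x† = (J conj(x))ᵀ`. -/
noncomputable def pairing (p q : ℕ) (z w : Fin (p + q) → ℂ) : ℂ :=
  ∑ i : Fin (p + q),
    (if (i : ℕ) < p then z i * (starRingEnd ℂ) (w i) else -(z i * (starRingEnd ℂ) (w i)))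

/-- The diagonal entries of `Λ = diag(λ_p, …, λ_1, μ_1, …, μ_q)`, where `lam` and `mu`
are 0-indexed: `lam i = λ_{i+1}` and `mu j = μ_{j+1}`. -/
noncomputable def diagEntries (p q : ℕ) (lam : Fin p → ℝ) (mu : Fin q → ℝ) :
    Fin (p + q) → ℂ :=
  fun i =>
    if h : (i : ℕ) < p then ((lam ⟨p - 1 - (i : ℕ), by omega⟩ : ℝ) : ℂ)
    else ((mu ⟨(i : ℕ) - p, by have := i.isLt; omega⟩ : ℝ) : ℂ)

/-- `A` is an admissible pseudo-Hermitian matrix with (real) eigenvalues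
`λ_p ≥ … ≥ λ_1 > μ_1 ≥ … ≥ μ_q`, recorded 0-indexed as `lam i = λ_{i+1}` (so `lam` is
monotone) and `mu j = μ_{j+1}` (so `mu` is antitone), with `λ_1 > μ_1`, and
`A = U Λ U⁻¹` for some invertible `U` with `U J Uᴴ = J`. -/
def IsAdmissible (p q : ℕ) (hp : 0 < p) (hq : 0 < q)
    (A : Matrix (Fin (p + q)) (Fin (p + q)) ℂ)
    (lam : Fin p → ℝ) (mu : Fin q → ℝ) : Prop :=
  A * Jmat p q = Jmat p q * A.conjTranspose ∧
  Monotone lam ∧ Antitone mu ∧ mu ⟨0, hq⟩ < lam ⟨0, hp⟩ ∧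
  ∃ U : Matrix (Fin (p + q)) (Fin (p + q)) ℂ,
    IsUnit U ∧ U * Jmat p q * U.conjTranspose = Jmat p q ∧
    A = U * Matrix.diagonal (diagEntries p q lam mu) * U⁻¹

/-- The Rayleigh ratio `R_A(x) = (x† A x)/(x† x)`, as a real number (for admissible
pseudo-Hermitian `A` both `x† A x` and `x† x` are real). -/
noncomputable def rayleigh (p q : ℕ) (A : Matrix (Fin (p + q)) (Fin (p + q)) ℂ)
    (x : Fin (p + q) → ℂ) : ℝ :=
  (pairing p q (A.mulVec x) x).re / (pairing p q x x).re

/-- A pseudo-orthonormal eigenbasis `v_1, …, v_p, w_1, …, w_q` (0-indexed) of an admissible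
matrix `A`: a basis of `ℂⁿ` with `A v_i = λ_i v_i`, `A w_j = μ_j w_j`, `⟨v_i,v_i⟩ = 1`,
`⟨w_j,w_j⟩ = −1`, and all pairings of distinct basis vectors zero. -/
def IsPseudoONEigenbasis (p q : ℕ) (A : Matrix (Fin (p + q)) (Fin (p + q)) ℂ)
    (lam : Fin p → ℝ) (mu : Fin q → ℝ)
    (v : Fin p → Fin (p + q) → ℂ) (w : Fin q → Fin (p + q) → ℂ) : Prop :=
  LinearIndependent ℂ (Fin.append v w) ∧
  Submodule.span ℂ (Set.range (Fin.append v w)) = ⊤ ∧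
  (∀ i, A.mulVec (v i) = (lam i : ℂ) • v i) ∧
  (∀ j, A.mulVec (w j) = (mu j : ℂ) • w j) ∧
  (∀ i i', pairing p q (v i) (v i') = if i = i' then 1 else 0) ∧
  (∀ j j', pairing p q (w j) (w j') = if j = j' then -1 else 0) ∧
  (∀ i j, pairing p q (v i) (w j) = 0) ∧
  (∀ j i, pairing p q (w j) (v i) = 0)

lemma pairing_eq0 (p q : ℕ) (z y : Fin (p + q) → ℂ) :
    pairing p q z y
      = ∑ i : Fin (p + q), (if (i : ℕ) < p then (1 : ℂ) else -1) * (z i * (starRingEnd ℂ) (y i)) := by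
  unfold pairing
  refine Finset.sum_congr rfl fun i _ => ?_
  split <;> ring

lemma pairing_sum_left (p q : ℕ) {ι : Type*} [Fintype ι]
    (c : ι → ℂ) (f : ι → Fin (p + q) → ℂ) (y : Fin (p + q) → ℂ) :
    pairing p q (∑ i, c i • f i) y = ∑ i, c i * pairing p q (f i) y := by
  simp only [pairing_eq0, Finset.sum_apply, Pi.smul_apply, smul_eq_mul,
    Finset.sum_mul, Finset.mul_sum]
  rw [Finset.sum_comm]
  exact Finset.sum_congr rfl fun i _ => Finset.sum_congr rfl fun n _ => by ring

lemma pairing_smul_left (p q : ℕ) (a : ℂ) (z y : Fin (p + q) → ℂ) :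
    pairing p q (a • z) y = a * pairing p q z y := by
  simp only [pairing_eq0, Pi.smul_apply, smul_eq_mul, Finset.mul_sum]
  exact Finset.sum_congr rfl fun n _ => by ring

lemma pairing_sum_right (p q : ℕ) {ι : Type*} [Fintype ι]
    (c : ι → ℂ) (f : ι → Fin (p + q) → ℂ) (z : Fin (p + q) → ℂ) :
    pairing p q z (∑ i, c i • f i) = ∑ i, (starRingEnd ℂ) (c i) * pairing p q z (f i) := by
  simp only [pairing_eq0, Finset.sum_apply, Pi.smul_apply, smul_eq_mul, map_sum, _root_.map_mul,
    Finset.mul_sum]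
  rw [Finset.sum_comm]
  exact Finset.sum_congr rfl fun i _ => Finset.sum_congr rfl fun n _ => by ring

lemma pairing_expand (p q : ℕ) {ι : Type*} [Fintype ι] [DecidableEq ι]
    (e : ι → Fin (p + q) → ℂ) (ε : ι → ℂ)
    (hE : ∀ s t, pairing p q (e s) (e t) = if s = t then ε s else 0)
    (c c' : ι → ℂ) :
    pairing p q (∑ s, c s • e s) (∑ t, c' t • e t)
      = ∑ s, ε s * (c s * (starRingEnd ℂ) (c' s)) := by
  rw [pairing_sum_left]
  simp only [pairing_sum_right, hE, mul_ite, mul_zero, Finset.sum_ite_eq, Finset.mem_univ,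
    if_true]
  exact Finset.sum_congr rfl fun s _ => by ring

lemma mulVec_sum_smul {n : ℕ} (A : Matrix (Fin n) (Fin n) ℂ) {ι : Type*} [Fintype ι]
    (c : ι → ℂ) (f : ι → Fin n → ℂ) :
    A.mulVec (∑ i, c i • f i) = ∑ i, c i • A.mulVec (f i) := by
  rw [← Matrix.mulVecLin_apply, map_sum]
  simp [Matrix.mulVecLin_apply]

/-- (a) `μ_k` is the maximum of `R_A(x)` over `x ∈ ℂⁿ₋` orthogonal to
`w_1, …, w_{k-1}`, attained at `w_k`; (b) `μ_k` is the minimum of `R_A(x)` over nonzero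
`x ∈ W = span{w_1,…,w_q}` orthogonal to `w_{k+1}, …, w_q`, attained at `w_k`.
(`k` is 1-indexed, `1 ≤ k ≤ q`.) -/
theorem mu_k_max_min_characterization
    (p q : ℕ) (hp : 0 < p) (hq : 0 < q)
    (A : Matrix (Fin (p + q)) (Fin (p + q)) ℂ)
    (lam : Fin p → ℝ) (mu : Fin q → ℝ)
    (v : Fin p → Fin (p + q) → ℂ) (w : Fin q → Fin (p + q) → ℂ)
    (hA : IsAdmissible p q hp hq A lam mu)
    (hvw : IsPseudoONEigenbasis p q A lam mu v w)
    (k : ℕ) (hk1 : 1 ≤ k) (hk2 : k ≤ q) :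
    (∀ x : Fin (p + q) → ℂ, (pairing p q x x).re < 0 →
        (∀ j : Fin q, (j : ℕ) < k - 1 → pairing p q x (w j) = 0) →
        rayleigh p q A x ≤ mu ⟨k - 1, by omega⟩) ∧
    (∀ x : Fin (p + q) → ℂ, x ∈ Submodule.span ℂ (Set.range w) → x ≠ 0 →
        (∀ j : Fin q, k ≤ (j : ℕ) → pairing p q x (w j) = 0) →
        mu ⟨k - 1, by omega⟩ ≤ rayleigh p q A x) ∧
    rayleigh p q A (w ⟨k - 1, by omega⟩) = mu ⟨k - 1, by omega⟩ := by

  obtain ⟨hJ, hlam, hmu, hgap, _U, _hU, _hUJ, _hAU⟩ := hA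
  obtain ⟨hli, hspan, hAv, hAw, hvv, hww, hvw0, hwv0⟩ := hvw
  have hkq : k - 1 < q := by omega
  have hmulam : ∀ i : Fin p, mu ⟨k - 1, hkq⟩ ≤ lam i := fun i => by
    have h1 : mu ⟨k - 1, hkq⟩ ≤ mu ⟨0, hq⟩ := hmu (by simp [Fin.le_def])
    have h2 : lam ⟨0, hp⟩ ≤ lam i := hlam (by simp [Fin.le_def])
    linarith
  have hwpart : rayleigh p q A (w ⟨k - 1, hkq⟩) = mu ⟨k - 1, hkq⟩ := by
    have h1 : pairing p q (A.mulVec (w ⟨k - 1, hkq⟩)) (w ⟨k - 1, hkq⟩)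
        = ((mu ⟨k - 1, hkq⟩ : ℂ)) * (-1) := by
      rw [hAw, pairing_smul_left, hww]; simp
    have h2 : pairing p q (w ⟨k - 1, hkq⟩) (w ⟨k - 1, hkq⟩) = -1 := by rw [hww]; simp
    rw [rayleigh, h1, h2]
    simp
  refine ⟨?_, ?_, hwpart⟩
  · -- part (a)
    intro x hxneg hxorth
    have hxmem : x ∈ Submodule.span ℂ (Set.range (Fin.append v w)) := by
      rw [hspan]; trivial
    obtain ⟨c, hc⟩ := (Submodule.mem_span_range_iff_exists_fun ℂ).mp hxmem
    set e : Fin (p + q) → Fin (p + q) → ℂ := Fin.append v w with he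
    have hcast : ∀ i : Fin p, e (Fin.castAdd q i) = v i := fun i => Fin.append_left v w i
    have hnat : ∀ j : Fin q, e (Fin.natAdd p j) = w j := fun j => Fin.append_right v w j
    set ε : Fin (p + q) → ℝ := fun s => if (s : ℕ) < p then 1 else -1 with hεdef
    set d : Fin (p + q) → ℝ :=
      fun s => if h : (s : ℕ) < p then lam ⟨s, h⟩
        else mu ⟨(s : ℕ) - p, by have := s.isLt; omega⟩ with hddef
    have hE : ∀ s t, pairing p q (e s) (e t) = if s = t then ((ε s : ℝ) : ℂ) else 0 := by
      intro s t
      induction s using Fin.addCases with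
      | left i =>
        induction t using Fin.addCases with
        | left i' =>
          rw [hcast, hcast, hvv]
          by_cases h : i = i'
          · subst h
            simp [hεdef, i.isLt]
          · rw [if_neg h, if_neg]
            intro hcon
            exact h (by
              have := congrArg Fin.val hcon
              simp at this
              exact Fin.ext this)
        | right j' =>
          rw [hcast, hnat, hvw0, if_neg]
          intro hcon
          have := congrArg Fin.val hcon
          simp at this
          omega
      | right j =>
        induction t using Fin.addCases with
        | left i' =>
          rw [hnat, hcast, hwv0, if_neg]
          intro hcon
          have := congrArg Fin.val hcon
          simp at this
          omega
        | right j' =>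
          rw [hnat, hnat, hww]
          by_cases h : j = j'
          · subst h
            have hnp : ¬ ((p : ℕ) + (j : ℕ) < p) := by omega
            simp [hεdef, hnp]
          · rw [if_neg h, if_neg]
            intro hcon
            exact h (by
              have := congrArg Fin.val hcon
              simp at this
              exact Fin.ext this)
    have hAe : ∀ s, A.mulVec (e s) = ((d s : ℝ) : ℂ) • e s := by
      intro s
      induction s using Fin.addCases with
      | left i =>
        rw [hcast, hAv]
        congr 1
        have : d (Fin.castAdd q i) = lam i := by
          simp [hddef, i.isLt]
        rw [this]
      | right j =>
        rw [hnat, hAw]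
        congr 1
        have h1 : ¬ (((Fin.natAdd p j : Fin (p + q)) : ℕ) < p) := by simp
        have : d (Fin.natAdd p j) = mu j := by
          simp only [hddef]
          rw [dif_neg h1]
          congr 1
          apply Fin.ext
          simp
        rw [this]
    have hxx : pairing p q x x = ((∑ s, ε s * Complex.normSq (c s) : ℝ) : ℂ) := by
      rw [← hc, pairing_expand p q e (fun s => ((ε s : ℝ) : ℂ)) hE c c]
      push_cast
      refine Finset.sum_congr rfl fun s _ => ?_
      rw [Complex.mul_conj]
    have hAx : A.mulVec x = ∑ s, (c s * ((d s : ℝ) : ℂ)) • e s := by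
      rw [← hc, mulVec_sum_smul]
      refine Finset.sum_congr rfl fun s _ => ?_
      rw [hAe s, smul_smul]
    have hAxx : pairing p q (A.mulVec x) x
        = ((∑ s, ε s * (d s * Complex.normSq (c s)) : ℝ) : ℂ) := by
      rw [hAx, ← hc, pairing_expand p q e (fun s => ((ε s : ℝ) : ℂ)) hE _ c]
      push_cast
      refine Finset.sum_congr rfl fun s _ => ?_
      rw [show (c s * (d s : ℂ)) * (starRingEnd ℂ) (c s)
            = (d s : ℂ) * (c s * (starRingEnd ℂ) (c s)) by ring, Complex.mul_conj]
    have hb0 : ∀ j : Fin q, (j : ℕ) < k - 1 → c (Fin.natAdd p j) = 0 := by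
      intro j hj
      have h := hxorth j hj
      rw [← hc, pairing_sum_left] at h
      have hew : ∀ s, pairing p q (e s) (w j) = if s = Fin.natAdd p j then (-1 : ℂ) else 0 := by
        intro s
        induction s using Fin.addCases with
        | left i =>
          rw [hcast, hvw0, if_neg]
          intro hcon
          have := congrArg Fin.val hcon
          simp at this
          omega
        | right j' =>
          rw [hnat, hww]
          by_cases hjj : j' = j
          · subst hjj; simp
          · rw [if_neg hjj, if_neg]
            intro hcon
            exact hjj (by
              have := congrArg Fin.val hcon
              simp at this
              exact Fin.ext this)
      simp only [hew, mul_ite, mul_neg_one, mul_zero, Finset.sum_ite_eq', Finset.mem_univ,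
        if_true, neg_eq_zero] at h
      exact h
    set D : ℝ := ∑ s, ε s * Complex.normSq (c s) with hDdef
    set N : ℝ := ∑ s, ε s * (d s * Complex.normSq (c s)) with hNdef
    have hD : D < 0 := by rwa [hxx, Complex.ofReal_re] at hxneg
    have key : 0 ≤ ∑ s, (ε s * (d s - mu ⟨k - 1, hkq⟩)) * Complex.normSq (c s) := by
      refine Finset.sum_nonneg fun s _ => ?_
      by_cases hs : (s : ℕ) < p
      · have hεs : ε s = 1 := by simp [hεdef, hs]
        have hds : d s = lam ⟨s, hs⟩ := by simp [hddef, hs]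
        have h1 := hmulam ⟨s, hs⟩
        have h2 := Complex.normSq_nonneg (c s)
        rw [hεs, hds]
        nlinarith
      · have hεs : ε s = -1 := by simp [hεdef, hs]
        have hsp : p ≤ (s : ℕ) := le_of_not_gt hs
        by_cases hj : (s : ℕ) - p < k - 1
        · have hc0 : c s = 0 := by
            have h := hb0 ⟨(s : ℕ) - p, by have := s.isLt; omega⟩ hj
            convert h using 2
            apply Fin.ext
            simp only [Fin.coe_natAdd]
            omega
          simp [hc0]
        · have hds : d s = mu ⟨(s : ℕ) - p, by have := s.isLt; omega⟩ := by
            simp [hddef, hs]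
          have hd2 : d s ≤ mu ⟨k - 1, hkq⟩ := by
            rw [hds]
            exact hmu (by simp [Fin.le_def]; omega)
          have h2 := Complex.normSq_nonneg (c s)
          rw [hεs]
          nlinarith
    have expand : N - mu ⟨k - 1, hkq⟩ * D
        = ∑ s, (ε s * (d s - mu ⟨k - 1, hkq⟩)) * Complex.normSq (c s) := by
      rw [hNdef, hDdef, Finset.mul_sum, ← Finset.sum_sub_distrib]
      exact Finset.sum_congr rfl fun s _ => by ring
    have hray : rayleigh p q A x = N / D := by
      rw [rayleigh, hxx, hAxx, Complex.ofReal_re, Complex.ofReal_re]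
    rw [hray, div_le_iff_of_neg hD]
    linarith
  · -- part (b)
    intro x hxmem hx0 hxorth
    obtain ⟨b, hb⟩ := (Submodule.mem_span_range_iff_exists_fun ℂ).mp hxmem
    have hEw : ∀ j j', pairing p q (w j) (w j') = if j = j' then (-1 : ℂ) else 0 := hww
    have hb0 : ∀ j : Fin q, k ≤ (j : ℕ) → b j = 0 := by
      intro j hj
      have h := hxorth j hj
      rw [← hb, pairing_sum_left] at h
      simp only [hww, mul_ite, mul_neg_one, mul_zero, Finset.sum_ite_eq', Finset.mem_univ,
        if_true, neg_eq_zero] at h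
      exact h
    have hxx : pairing p q x x = ((∑ j, -Complex.normSq (b j) : ℝ) : ℂ) := by
      rw [← hb, pairing_expand p q w (fun _ => (-1 : ℂ)) hEw b b]
      push_cast
      refine Finset.sum_congr rfl fun j _ => ?_
      rw [Complex.mul_conj]
      ring
    have hAx : A.mulVec x = ∑ j, (b j * ((mu j : ℝ) : ℂ)) • w j := by
      rw [← hb, mulVec_sum_smul]
      refine Finset.sum_congr rfl fun j _ => ?_
      rw [hAw j, smul_smul]
    have hAxx : pairing p q (A.mulVec x) x
        = ((∑ j, -(mu j * Complex.normSq (b j)) : ℝ) : ℂ) := by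
      rw [hAx, ← hb, pairing_expand p q w (fun _ => (-1 : ℂ)) hEw _ b]
      push_cast
      refine Finset.sum_congr rfl fun j _ => ?_
      rw [show (b j * (mu j : ℂ)) * (starRingEnd ℂ) (b j)
            = (mu j : ℂ) * (b j * (starRingEnd ℂ) (b j)) by ring, Complex.mul_conj]
      ring
    have hex : ∃ j, b j ≠ 0 := by
      by_contra hall
      push_neg at hall
      apply hx0
      rw [← hb]
      simp [hall]
    obtain ⟨j0, hj0⟩ := hex
    have hpos : 0 < ∑ j, Complex.normSq (b j) :=
      Finset.sum_pos' (fun j _ => Complex.normSq_nonneg _)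
        ⟨j0, Finset.mem_univ _, Complex.normSq_pos.2 hj0⟩
    set D : ℝ := ∑ j, -Complex.normSq (b j) with hDdef
    set N : ℝ := ∑ j, -(mu j * Complex.normSq (b j)) with hNdef
    have hD : D < 0 := by
      rw [hDdef, Finset.sum_neg_distrib]
      linarith
    have key : 0 ≤ ∑ j, (mu j - mu ⟨k - 1, hkq⟩) * Complex.normSq (b j) := by
      refine Finset.sum_nonneg fun j _ => ?_
      by_cases hj : k ≤ (j : ℕ)
      · simp [hb0 j hj]
      · have hmuj : mu ⟨k - 1, hkq⟩ ≤ mu j := hmu (by simp [Fin.le_def]; omega)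
        have h2 := Complex.normSq_nonneg (b j)
        nlinarith
    have expand : mu ⟨k - 1, hkq⟩ * D - N
        = ∑ j, (mu j - mu ⟨k - 1, hkq⟩) * Complex.normSq (b j) := by
      rw [hNdef, hDdef, Finset.mul_sum, ← Finset.sum_sub_distrib]
      exact Finset.sum_congr rfl fun j _ => by ring
    have hray : rayleigh p q A x = N / D := by
      rw [rayleigh, hxx, hAxx, Complex.ofReal_re, Complex.ofReal_re]
    rw [hray, le_div_iff_of_neg hD]
    linarith
end

section
/- (Subspace form of the Courant–Fischer analogue.) Let A be an admissible pseudo-Hermitian n×n matrix with eigenvalues λ_p ≥ … ≥ λ_1 > μ_1 ≥ … ≥ μ_q, and let 1 ≤ k ≤ p. Then: (i) for every k-dimensional complex subspace W ⊆ ℂⁿ with W ∖ {0} ⊆ ℂⁿ₊, there exists a nonzero x ∈ W with R_A(x) ≥ λ_k; and (ii) there exists a k-dimensional complex subspace W ⊆ ℂⁿ with W ∖ {0} ⊆ ℂⁿ₊ such that R_A(x) ≤ λ_k for every nonzero x ∈ W, with equality attained. Consequently λ_k = min over k-dimensional subspaces W lying (apart from the origin) in ℂⁿ₊ of max_{x ∈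 W∖{0}} R_A(x). -/
open Matrix

lemma pairing_eq {p q : ℕ} (z w : Fin (p+q) → ℂ) :
    pairing p q z w = star w ⬝ᵥ (Jmat p q *ᵥ z) := by
  unfold pairing Jmat dotProduct
  refine Finset.sum_congr rfl fun i _ => ?_
  simp only [mulVec_diagonal, Pi.star_apply, Complex.star_def]
  split <;> ring

lemma conj_quad {p q : ℕ} (M N : Matrix (Fin (p+q)) (Fin (p+q)) ℂ) (y : Fin (p+q) → ℂ) :
    star (N *ᵥ y) ⬝ᵥ ((M * N) *ᵥ y) = star y ⬝ᵥ ((Nᴴ * M * N) *ᵥ y) := by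
  rw [star_mulVec, dotProduct_mulVec, dotProduct_mulVec, vecMul_vecMul, Matrix.mul_assoc]

lemma re_pair {p q : ℕ} (y : Fin (p+q) → ℂ) :
    (pairing p q y y).re
      = ∑ i : Fin (p+q), (if (i:ℕ) < p then Complex.normSq (y i) else -Complex.normSq (y i)) := by
  unfold pairing
  rw [Complex.re_sum]
  refine Finset.sum_congr rfl fun i _ => ?_
  split <;> simp [Complex.mul_conj]

lemma re_quad {p q : ℕ} (d y : Fin (p+q) → ℂ) :
    (pairing p q (Matrix.diagonal d *ᵥ y) y).re
      = ∑ i : Fin (p+q), (if (i:ℕ) < p then (d i).re * Complex.normSq (y i)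
              else -((d i).re * Complex.normSq (y i))) := by
  unfold pairing
  rw [Complex.re_sum]
  refine Finset.sum_congr rfl fun i _ => ?_
  rw [mulVec_diagonal]
  have h : d i * y i * (starRingEnd ℂ) (y i) = ((Complex.normSq (y i) : ℝ) : ℂ) * d i := by
    rw [mul_assoc, Complex.mul_conj]; ring
  split <;> rw [h] <;> simp [Complex.re_ofReal_mul] <;> ring

set_option maxHeartbeats 2000000 in
/-- subspace form of Courant–Fischer: for `1 ≤ k ≤ p`,
(i) every `k`-dimensional subspace `W` with `W ∖ {0} ⊆ ℂⁿ₊` contains a nonzero `x`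
with `R_A(x) ≥ λ_k`; (ii) there is such a `W` on which `R_A ≤ λ_k` with equality
attained. -/
theorem courant_fischer_subspace_form
    (p q : ℕ) (hp : 0 < p) (hq : 0 < q)
    (A : Matrix (Fin (p + q)) (Fin (p + q)) ℂ)
    (lam : Fin p → ℝ) (mu : Fin q → ℝ)
    (hA : IsAdmissible p q hp hq A lam mu)
    (k : ℕ) (hk1 : 1 ≤ k) (hk2 : k ≤ p) :
    (∀ W : Submodule ℂ (Fin (p + q) → ℂ), Module.finrank ℂ W = k →
        (∀ x ∈ W, x ≠ 0 → 0 < (pairing p q x x).re) →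
        ∃ x ∈ W, x ≠ 0 ∧ lam ⟨k - 1, by omega⟩ ≤ rayleigh p q A x) ∧
    (∃ W : Submodule ℂ (Fin (p + q) → ℂ), Module.finrank ℂ W = k ∧
        (∀ x ∈ W, x ≠ 0 → 0 < (pairing p q x x).re) ∧
        (∀ x ∈ W, x ≠ 0 → rayleigh p q A x ≤ lam ⟨k - 1, by omega⟩) ∧
        (∃ x ∈ W, x ≠ 0 ∧ rayleigh p q A x = lam ⟨k - 1, by omega⟩)) := by
  obtain ⟨hpsH, hmono, hanti, hgap, U, hU, hUJ, hAeq⟩ := hA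
  set D := Matrix.diagonal (diagEntries p q lam mu) with hD
  have hdet : IsUnit U.det := (Matrix.isUnit_iff_isUnit_det U).mp hU
  have hUUi : U * U⁻¹ = 1 := Matrix.mul_nonsing_inv U hdet
  have hUiU : U⁻¹ * U = 1 := Matrix.nonsing_inv_mul U hdet
  have hJJ : Jmat p q * Jmat p q = 1 := by
    unfold Jmat
    rw [Matrix.diagonal_mul_diagonal,
      show (fun i : Fin (p+q) => (if (i:ℕ) < p then (1:ℂ) else -1) * (if (i:ℕ) < p then 1 else -1))
        = fun _ => 1 from funext fun i => by split <;> norm_num, Matrix.diagonal_one]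
  have hJUc : Jmat p q * Uᴴ = U⁻¹ * Jmat p q := by
    calc Jmat p q * Uᴴ = (U⁻¹ * U) * (Jmat p q * Uᴴ) := by rw [hUiU, one_mul]
    _ = U⁻¹ * (U * Jmat p q * Uᴴ) := by simp only [Matrix.mul_assoc]
    _ = U⁻¹ * Jmat p q := by rw [hUJ]
  have hUJU : Uᴴ * Jmat p q * U = Jmat p q := by
    have h2 : Uᴴ = Jmat p q * (U⁻¹ * Jmat p q) := by
      calc Uᴴ = (Jmat p q * Jmat p q) * Uᴴ := by rw [hJJ, one_mul]
      _ = Jmat p q * (Jmat p q * Uᴴ) := by rw [Matrix.mul_assoc]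
      _ = Jmat p q * (U⁻¹ * Jmat p q) := by rw [hJUc]
    calc Uᴴ * Jmat p q * U
        = Jmat p q * (U⁻¹ * (Jmat p q * (Jmat p q * U))) := by
          rw [h2]; simp only [Matrix.mul_assoc]
      _ = Jmat p q * (U⁻¹ * U) := by rw [← Matrix.mul_assoc (Jmat p q) (Jmat p q) U, hJJ, one_mul]
      _ = Jmat p q := by rw [hUiU, mul_one]
  have hAU : A * U = U * D := by
    rw [hAeq]
    simp only [Matrix.mul_assoc]
    rw [hUiU, mul_one]
  have key_den : ∀ y, pairing p q (U *ᵥ y) (U *ᵥ y) = pairing p q y y := by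
    intro y
    rw [pairing_eq, pairing_eq, mulVec_mulVec, conj_quad, hUJU]
  have key_num : ∀ y, pairing p q (A *ᵥ (U *ᵥ y)) (U *ᵥ y) = pairing p q (D *ᵥ y) y := by
    intro y
    have hmat : Uᴴ * (Jmat p q * A) * U = Jmat p q * D := by
      calc Uᴴ * (Jmat p q * A) * U = Uᴴ * Jmat p q * (A * U) := by simp only [Matrix.mul_assoc]
      _ = Uᴴ * Jmat p q * (U * D) := by rw [hAU]
      _ = (Uᴴ * Jmat p q * U) * D := by simp only [Matrix.mul_assoc]
      _ = Jmat p q * D := by rw [hUJU]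
    calc pairing p q (A *ᵥ (U *ᵥ y)) (U *ᵥ y)
        = star (U *ᵥ y) ⬝ᵥ ((Jmat p q * A * U) *ᵥ y) := by
          rw [pairing_eq, mulVec_mulVec, mulVec_mulVec]
      _ = star y ⬝ᵥ ((Uᴴ * (Jmat p q * A) * U) *ᵥ y) := conj_quad _ _ _
      _ = star y ⬝ᵥ ((Jmat p q * D) *ᵥ y) := by rw [hmat]
      _ = pairing p q (D *ᵥ y) y := by rw [pairing_eq, mulVec_mulVec]
  have den_re : ∀ y, (pairing p q (U *ᵥ y) (U *ᵥ y)).re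
      = ∑ i : Fin (p+q), (if (i:ℕ) < p then Complex.normSq (y i) else -Complex.normSq (y i)) :=
    fun y => by rw [key_den, re_pair]
  have num_re : ∀ y, (pairing p q (A *ᵥ (U *ᵥ y)) (U *ᵥ y)).re
      = ∑ i : Fin (p+q), (if (i:ℕ) < p then (diagEntries p q lam mu i).re * Complex.normSq (y i)
          else -((diagEntries p q lam mu i).re * Complex.normSq (y i))) :=
    fun y => by rw [key_num, re_quad]
  have dlam : ∀ i : Fin (p+q), ((i:ℕ) < p) →
      (diagEntries p q lam mu i).re = lam ⟨p - 1 - (i:ℕ), by omega⟩ := by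
    intro i h
    simp [diagEntries, h]
  have dmu : ∀ i : Fin (p+q), ¬((i:ℕ) < p) →
      (diagEntries p q lam mu i).re = mu ⟨(i:ℕ) - p, by have := i.isLt; omega⟩ := by
    intro i h
    simp [diagEntries, h]
  -- the linear equivalence given by U
  have h₁ : U.mulVecLin ∘ₗ (U⁻¹).mulVecLin = LinearMap.id := by
    rw [← Matrix.mulVecLin_mul, hUUi, Matrix.mulVecLin_one]
  have h₂ : (U⁻¹).mulVecLin ∘ₗ U.mulVecLin = LinearMap.id := by
    rw [← Matrix.mulVecLin_mul, hUiU, Matrix.mulVecLin_one]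
  set e : (Fin (p+q) → ℂ) ≃ₗ[ℂ] (Fin (p+q) → ℂ) :=
    LinearEquiv.ofLinear U.mulVecLin (U⁻¹).mulVecLin h₁ h₂ with he_def
  have he : ∀ y, e y = U *ᵥ y := fun y => rfl
  constructor
  · -- part (i)
    intro W hWk hWpos
    set V := W.map (e.symm : (Fin (p+q) → ℂ) →ₗ[ℂ] (Fin (p+q) → ℂ)) with hV_def
    have hV : Module.finrank ℂ V = k := by
      rw [hV_def, LinearEquiv.finrank_map_eq]; exact hWk
    set L : (Fin (p+q) → ℂ) →ₗ[ℂ] (Fin (k-1) → ℂ) :=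
      LinearMap.pi (fun j : Fin (k-1) =>
        LinearMap.proj (⟨p - k + 1 + (j:ℕ), by have := j.isLt; omega⟩ : Fin (p+q))) with hL_def
    set S := LinearMap.ker L with hS_def
    have hrange : Module.finrank ℂ (LinearMap.range L) ≤ k - 1 := by
      refine le_trans (Submodule.finrank_le _) ?_
      simp [Module.finrank_pi]
    have hrk : Module.finrank ℂ (LinearMap.range L) + Module.finrank ℂ S = p + q := by
      rw [LinearMap.finrank_range_add_finrank_ker]
      simp [Module.finrank_pi]
    have hsum := Submodule.finrank_sup_add_finrank_inf_eq V S
    have htop : Module.finrank ℂ ↥(V ⊔ S) ≤ p + q := by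
      refine le_trans (Submodule.finrank_le _) ?_
      simp [Module.finrank_pi]
    have hpos : 0 < Module.finrank ℂ ↥(V ⊓ S) := by omega
    obtain ⟨v, hv⟩ := Module.finrank_pos_iff_exists_ne_zero.mp hpos
    have hyV : (v : Fin (p+q) → ℂ) ∈ V := v.2.1
    have hyS : (v : Fin (p+q) → ℂ) ∈ S := v.2.2
    set y := (v : Fin (p+q) → ℂ) with hy_def
    have hy0 : y ≠ 0 := fun h => hv (Subtype.ext h)
    obtain ⟨w, hwW, hwy⟩ := hyV
    have hxy : U *ᵥ y = w := by
      rw [← he y, ← hwy]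
      exact e.apply_symm_apply w
    have hx0 : U *ᵥ y ≠ 0 := by
      intro h
      apply hy0
      have hinv : U⁻¹ *ᵥ (U *ᵥ y) = y := by rw [mulVec_mulVec, hUiU, one_mulVec]
      rw [← hinv, h, mulVec_zero]
    have hxW : U *ᵥ y ∈ W := by rw [hxy]; exact hwW
    have hden : 0 < (pairing p q (U *ᵥ y) (U *ᵥ y)).re := hWpos _ hxW hx0
    have hLy : L y = 0 := hyS
    have hsupp : ∀ i : Fin (p+q), p - k < (i:ℕ) → (i:ℕ) < p → y i = 0 := by
      intro i h1 h2
      have hj : (i:ℕ) - (p-k+1) < k-1 := by omega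
      have h3 := congrFun hLy ⟨(i:ℕ)-(p-k+1), hj⟩
      simp only [hL_def, LinearMap.pi_apply, LinearMap.proj_apply, Pi.zero_apply] at h3
      have h4 : (⟨p - k + 1 + ((i:ℕ)-(p-k+1)), by have := i.isLt; omega⟩ : Fin (p+q)) = i :=
        Fin.ext (by simp; omega)
      rwa [h4] at h3
    have main_ineq : lam ⟨k-1, by omega⟩ * (pairing p q (U *ᵥ y) (U *ᵥ y)).re
        ≤ (pairing p q (A *ᵥ (U *ᵥ y)) (U *ᵥ y)).re := by
      rw [den_re, num_re, Finset.mul_sum]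
      refine Finset.sum_le_sum fun i _ => ?_
      by_cases hip : (i:ℕ) < p
      · by_cases hik : (i:ℕ) ≤ p - k
        · rw [if_pos hip, if_pos hip, dlam i hip]
          have hle : lam ⟨k-1, by omega⟩ ≤ lam ⟨p-1-(i:ℕ), by omega⟩ := by
            apply hmono
            simp only [Fin.mk_le_mk]
            omega
          exact mul_le_mul_of_nonneg_right hle (Complex.normSq_nonneg _)
        · have hz : y i = 0 := hsupp i (by omega) hip
          simp [hz, if_pos hip]
      · rw [if_neg hip, if_neg hip, dmu i hip]
        have h1 : mu ⟨(i:ℕ) - p, by have := i.isLt; omega⟩ ≤ mu ⟨0, hq⟩ := by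
          apply hanti
          simp only [Fin.mk_le_mk]
          omega
        have h2 : lam ⟨0, hp⟩ ≤ lam ⟨k-1, by omega⟩ := by
          apply hmono
          simp only [Fin.mk_le_mk]
          omega
        have h3 : mu ⟨(i:ℕ) - p, by have := i.isLt; omega⟩ ≤ lam ⟨k-1, by omega⟩ :=
          le_trans h1 (le_trans hgap.le h2)
        have h4 := mul_le_mul_of_nonneg_right h3 (Complex.normSq_nonneg (y i))
        linarith
    refine ⟨U *ᵥ y, hxW, hx0, ?_⟩
    rw [rayleigh, le_div_iff₀ hden]
    exact main_ineq
  · -- part (ii)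
    have hk0 : 0 < k := hk1
    set ι : Fin k → Fin (p+q) := fun j => ⟨p - k + (j:ℕ), by have := j.isLt; omega⟩ with hι_def
    have hι : Function.Injective ι := by
      intro a b h
      have h' : p - k + (a:ℕ) = p - k + (b:ℕ) := by
        have := congrArg Fin.val h
        simpa [hι_def] using this
      exact Fin.ext (by omega)
    set b0 : Fin k → (Fin (p+q) → ℂ) := fun j => Pi.single (ι j) 1 with hb0_def
    have hb0eq : b0 = (Pi.basisFun ℂ (Fin (p+q))) ∘ ι := by
      funext j
      simp [hb0_def, Pi.basisFun_apply]
    have hbli : LinearIndependent ℂ b0 := by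
      rw [hb0eq]
      exact (Pi.basisFun ℂ (Fin (p+q))).linearIndependent.comp ι hι
    have hbz : ∀ j i, i ≠ ι j → b0 j i = 0 := by
      intro j i h
      simp [hb0_def, Pi.single_eq_of_ne h]
    have hbs : ∀ j, b0 j (ι j) = 1 := by
      intro j
      simp [hb0_def]
    set W0 := Submodule.span ℂ (Set.range b0) with hW0_def
    have hW0 : Module.finrank ℂ W0 = k := by
      rw [hW0_def, finrank_span_eq_card hbli, Fintype.card_fin]
    have hsupp : ∀ y ∈ W0, ∀ i : Fin (p+q), ((i:ℕ) < p - k ∨ p ≤ (i:ℕ)) → y i = 0 := by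
      intro y hy i hi
      have hker : W0 ≤ LinearMap.ker (LinearMap.proj i : (Fin (p+q) → ℂ) →ₗ[ℂ] ℂ) := by
        rw [hW0_def, Submodule.span_le]
        rintro z ⟨j, rfl⟩
        simp only [SetLike.mem_coe, LinearMap.mem_ker, LinearMap.proj_apply]
        apply hbz
        intro h
        rw [h] at hi
        simp only [hι_def] at hi
        have := j.isLt
        omega
      exact hker hy
    have den_eq : ∀ y ∈ W0, (pairing p q (U *ᵥ y) (U *ᵥ y)).re
        = ∑ i : Fin (p+q), Complex.normSq (y i) := by
      intro y hy
      rw [den_re]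
      refine Finset.sum_congr rfl fun i _ => ?_
      by_cases h : (i:ℕ) < p
      · rw [if_pos h]
      · rw [if_neg h, hsupp y hy i (Or.inr (not_lt.mp h))]
        simp
    refine ⟨W0.map (e : (Fin (p+q) → ℂ) →ₗ[ℂ] (Fin (p+q) → ℂ)), ?_, ?_, ?_, ?_⟩
    · rw [LinearEquiv.finrank_map_eq]; exact hW0
    · rintro x ⟨y, hy, rfl⟩ hx0
      have hy0 : y ≠ 0 := by
        intro h
        apply hx0
        rw [h, map_zero]
      obtain ⟨i0, hi0⟩ : ∃ i, y i ≠ 0 := by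
        by_contra h
        push_neg at h
        exact hy0 (funext h)
      have : (e : (Fin (p+q) → ℂ) →ₗ[ℂ] (Fin (p+q) → ℂ)) y = U *ᵥ y := rfl
      rw [this, den_eq y hy]
      refine Finset.sum_pos' (fun i _ => Complex.normSq_nonneg _)
        ⟨i0, Finset.mem_univ _, Complex.normSq_pos.mpr hi0⟩
    · rintro x ⟨y, hy, rfl⟩ hx0
      have hcoe : (e : (Fin (p+q) → ℂ) →ₗ[ℂ] (Fin (p+q) → ℂ)) y = U *ᵥ y := rfl
      have hy0 : y ≠ 0 := by
        intro h; apply hx0; rw [h, map_zero]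
      obtain ⟨i0, hi0⟩ : ∃ i, y i ≠ 0 := by
        by_contra h; push_neg at h; exact hy0 (funext h)
      have hden : 0 < (pairing p q (U *ᵥ y) (U *ᵥ y)).re := by
        rw [den_eq y hy]
        exact Finset.sum_pos' (fun i _ => Complex.normSq_nonneg _)
          ⟨i0, Finset.mem_univ _, Complex.normSq_pos.mpr hi0⟩
      rw [hcoe, rayleigh, div_le_iff₀ hden]
      rw [num_re, den_eq y hy, Finset.mul_sum]
      refine Finset.sum_le_sum fun i _ => ?_
      by_cases hip : (i:ℕ) < p
      · by_cases hik : p - k ≤ (i:ℕ)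
        · rw [if_pos hip, dlam i hip]
          have hle : lam ⟨p-1-(i:ℕ), by omega⟩ ≤ lam ⟨k-1, by omega⟩ := by
            apply hmono
            simp only [Fin.mk_le_mk]
            omega
          exact mul_le_mul_of_nonneg_right hle (Complex.normSq_nonneg _)
        · rw [hsupp y hy i (Or.inl (by omega))]
          simp
      · rw [hsupp y hy i (Or.inr (not_lt.mp hip))]
        simp
    · set j0 : Fin k := ⟨0, hk0⟩ with hj0_def
      set y0 := b0 j0 with hy0_def
      have hy0W : y0 ∈ W0 := Submodule.subset_span ⟨j0, rfl⟩
      have hy0ne : y0 ≠ 0 := by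
        intro h
        have h1 : y0 (ι j0) = 1 := by rw [hy0_def]; exact hbs j0
        rw [h] at h1
        simp at h1
      refine ⟨e y0, Submodule.mem_map_of_mem hy0W, ?_, ?_⟩
      · intro h
        exact hy0ne (by simpa using e.map_eq_zero_iff.mp h)
      · have hcoe : e y0 = U *ᵥ y0 := rfl
        have hnorm : ∀ i, i ≠ ι j0 → Complex.normSq (y0 i) = 0 := by
          intro i h
          rw [hy0_def, hbz j0 i h, map_zero]
        have hnorm1 : Complex.normSq (y0 (ι j0)) = 1 := by
          rw [hy0_def, hbs j0]
          simp
        have hlt : ((ι j0 : Fin (p+q)) : ℕ) < p := by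
          simp only [hι_def, hj0_def]
          omega
        have hdenval : (pairing p q (U *ᵥ y0) (U *ᵥ y0)).re = 1 := by
          rw [den_eq y0 hy0W]
          rw [Finset.sum_eq_single_of_mem (ι j0) (Finset.mem_univ _)
            (fun i _ h => hnorm i h), hnorm1]
        have hnumval : (pairing p q (A *ᵥ (U *ᵥ y0)) (U *ᵥ y0)).re = lam ⟨k-1, by omega⟩ := by
          rw [num_re]
          rw [Finset.sum_eq_single_of_mem (ι j0) (Finset.mem_univ _)
            (fun i _ h => by rw [hnorm i h]; split <;> ring)]
          rw [if_pos hlt, dlam _ hlt, hnorm1, mul_one]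
          congr 1
          apply Fin.ext
          simp only [hι_def, hj0_def]
          omega
        rw [hcoe, rayleigh, hnumval, hdenval, div_one]
end
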